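/- arXiv:2305.04805 — 2 statements merged into one kernel-verified Lean document; each statement's English description precedes it below -/
import Mathlib

section
/- For each t ∈ [0,1), the spectrum of C_t, computed in the algebra of continuous linear endomorphisms of ω, equals Λ, and the set of eigenvalues of C_t on ω also equals Λ; each eigenvalue 1/(m+1) is simple, with eigenspace Ker((1/(m+1))I − C_t) = span{x^{[m]}}. -/
/-- The generalized Cesàro operator `C_t` acting on complex sequences:
`(C_t x)_n = (1/(n+1)) ∑_{i=0}^n t^{n-i} x_i`. -/
noncomputable def genCesaro (t : ℝ) (x : ℕ → ℂ) : ℕ → ℂ :=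
  fun n => (1 / ((n : ℂ) + 1)) * ∑ i ∈ Finset.range (n + 1), (t : ℂ) ^ (n - i) * x i

/-- The eigenvector `x^{[m]}`: `x^{[m]}_n = 0` for `n < m` and
`x^{[m]}_n = C(n,m) t^{n-m}` for `n ≥ m`. -/
noncomputable def eigvec (t : ℝ) (m : ℕ) : ℕ → ℂ :=
  fun n => if n < m then 0 else (Nat.choose n m : ℂ) * (t : ℂ) ^ (n - m)

open Finset

lemma sum_succ_rel (t : ℝ) (x : ℕ → ℂ) (n : ℕ) :
    ∑ i ∈ range (n + 2), (t : ℂ) ^ (n + 1 - i) * x i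
      = (t : ℂ) * ∑ i ∈ range (n + 1), (t : ℂ) ^ (n - i) * x i + x (n + 1) := by
  rw [Finset.sum_range_succ, Finset.mul_sum]
  congr 1
  · apply Finset.sum_congr rfl
    intro i hi
    rw [mem_range] at hi
    rw [← mul_assoc, ← pow_succ']
    congr 2
    omega
  · simp

lemma natC_ne (n : ℕ) : ((n : ℂ) + 1) ≠ 0 := by
  exact Nat.cast_add_one_ne_zero n

lemma eig_iff (t : ℝ) (μ : ℂ) (x : ℕ → ℂ) :
    genCesaro t x = μ • x ↔
      ((μ - 1) * x 0 = 0 ∧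
        ∀ n : ℕ, (μ * ((n : ℂ) + 2) - 1) * x (n + 1) = (t : ℂ) * μ * ((n : ℂ) + 1) * x n) := by
  have key : genCesaro t x = μ • x ↔
      ∀ n : ℕ, ∑ i ∈ range (n + 1), (t : ℂ) ^ (n - i) * x i = μ * ((n : ℂ) + 1) * x n := by
    rw [funext_iff]
    apply forall_congr'
    intro n
    rw [genCesaro, Pi.smul_apply, smul_eq_mul]
    rw [div_mul_eq_mul_div, one_mul, div_eq_iff (natC_ne n)]
    constructor <;> intro h <;> [skip; skip] <;> linear_combination h
  rw [key]
  constructor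
  · intro h
    constructor
    · have h0 := h 0
      simp at h0
      linear_combination -h0
    · intro n
      have h1 := h (n + 1)
      have h2 := h n
      rw [sum_succ_rel, h2] at h1
      push_cast at h1 ⊢
      linear_combination -h1
  · rintro ⟨h0, hrec⟩ n
    induction n with
    | zero => simp; linear_combination -h0
    | succ n ih =>
      rw [sum_succ_rel, ih]
      have := hrec n
      push_cast at this ⊢
      linear_combination -this

lemma eigvec_self (t : ℝ) (m : ℕ) : eigvec t m m = 1 := by
  simp [eigvec]

lemma eigvec_rec (t : ℝ) (m n : ℕ) :
    ((n : ℂ) + 1 - m) * eigvec t m (n + 1) = (t : ℂ) * ((n : ℂ) + 1) * eigvec t m n := by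
  rcases lt_trichotomy (n + 1) m with h | h | h
  · have e1 : eigvec t m (n + 1) = 0 := if_pos h
    have e2 : eigvec t m n = 0 := if_pos (by omega)
    rw [e1, e2]; ring
  · have e2 : eigvec t m n = 0 := if_pos (by omega)
    have hc : ((n : ℂ) + 1 - m) = 0 := by subst h; push_cast; ring
    rw [e2, hc]; ring
  · have hm : m ≤ n := by omega
    have e1 : eigvec t m (n + 1) = ((n + 1).choose m : ℂ) * (t : ℂ) ^ (n + 1 - m) :=
      if_neg (by omega)
    have e2 : eigvec t m n = (n.choose m : ℂ) * (t : ℂ) ^ (n - m) := if_neg (by omega)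
    rw [e1, e2]
    have hpow : (t : ℂ) ^ (n + 1 - m) = (t : ℂ) * (t : ℂ) ^ (n - m) := by
      rw [← pow_succ']; congr 1; omega
    rw [hpow]
    have hbN := Nat.choose_mul_succ_eq n m
    have hbC := congrArg (Nat.cast : ℕ → ℂ) hbN
    push_cast [Nat.cast_sub (by omega : m ≤ n + 1)] at hbC
    linear_combination -((t : ℂ) ^ (n - m) * (t : ℂ) * hbC)

lemma eigvec_eigen (t : ℝ) (m : ℕ) :
    genCesaro t (eigvec t m) = (1 / ((m : ℂ) + 1)) • eigvec t m := by
  rw [eig_iff]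
  constructor
  · rcases Nat.eq_zero_or_pos m with h | h
    · subst h; simp
    · have : eigvec t m 0 = 0 := by simp [eigvec, h]
      rw [this, mul_zero]
  · intro n
    have h := eigvec_rec t m n
    have hm := natC_ne m
    field_simp
    linear_combination h

lemma genCesaro_smul (t : ℝ) (c : ℂ) (x : ℕ → ℂ) :
    genCesaro t (c • x) = c • genCesaro t x := by
  funext n
  simp only [genCesaro, Pi.smul_apply, smul_eq_mul, Finset.mul_sum]
  exact Finset.sum_congr rfl fun i _ => by ring

lemma eig_sol (t : ℝ) (m : ℕ) (x : ℕ → ℂ)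
    (hx : genCesaro t x = (1 / ((m : ℂ) + 1)) • x) :
    ∀ n, x n = x m * eigvec t m n := by
  rw [eig_iff] at hx
  obtain ⟨h0, hrec⟩ := hx
  intro n
  induction n with
  | zero =>
    rcases Nat.eq_zero_or_pos m with h | h
    · subst h; rw [eigvec_self]; ring
    · have e0 : eigvec t m 0 = 0 := if_pos h
      have hne : (1 / ((m : ℂ) + 1) - 1) ≠ 0 := by
        rw [sub_ne_zero]
        intro hc
        rw [div_eq_one_iff_eq (natC_ne m)] at hc
        have : (m : ℂ) = 0 := by linear_combination -hc
        exact (by exact_mod_cast h.ne' : (m : ℂ) ≠ 0) this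
      rcases mul_eq_zero.mp h0 with h' | h'
      · exact absurd h' hne
      · rw [h', e0]; ring
  | succ n ih =>
    rcases eq_or_ne (n + 1) m with he | he
    · subst he
      rw [eigvec_self]
      ring
    · have hr := hrec n
      rw [ih] at hr
      have her := eigvec_rec t m n
      have hne : (1 / ((m : ℂ) + 1) * ((n : ℂ) + 2) - 1) ≠ 0 := by
        intro hc
        rw [sub_eq_zero, div_mul_eq_mul_div, one_mul, div_eq_one_iff_eq (natC_ne m)] at hc
        have : ((n : ℂ) + 1) = (m : ℂ) := by linear_combination hc
        exact he (by exact_mod_cast this)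
      have hmne := natC_ne m
      apply mul_left_cancel₀ hne
      rw [hr]
      linear_combination (norm := (field_simp; ring)) (-(x m) / ((m : ℂ) + 1)) * her

lemma noeig (t : ℝ) (μ : ℂ) (h : ∀ n : ℕ, μ ≠ 1 / ((n : ℂ) + 1)) (x : ℕ → ℂ)
    (hx : genCesaro t x = μ • x) : x = 0 := by
  rw [eig_iff] at hx
  obtain ⟨h0, hrec⟩ := hx
  have key : ∀ n : ℕ, μ * ((n : ℂ) + 1) - 1 ≠ 0 := by
    intro n hc
    apply h n
    rw [sub_eq_zero] at hc
    rw [eq_div_iff (natC_ne n)]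
    linear_combination hc
  funext n
  show x n = 0
  induction n with
  | zero =>
    have k0 : μ - 1 ≠ 0 := by
      intro hc
      apply key 0
      push_cast
      linear_combination hc
    rcases mul_eq_zero.mp h0 with h' | h'
    · exact absurd h' k0
    · exact h'
  | succ n ih =>
    have hr := hrec n
    rw [ih, mul_zero] at hr
    have k1 : μ * ((n : ℂ) + 2) - 1 ≠ 0 := by
      intro hc
      apply key (n + 1)
      push_cast
      linear_combination hc
    rcases mul_eq_zero.mp hr with h' | h'
    · exact absurd h' k1
    · exact h'

/-- Auxiliary recursion computing (solution, weighted partial sum) for the resolvent. -/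
noncomputable def resAux (t : ℝ) (μ : ℂ) (x : ℕ → ℂ) : ℕ → ℂ × ℂ
  | 0 => (x 0 / (μ - 1), x 0 / (μ - 1))
  | n + 1 =>
      let p := resAux t μ x n
      let y := (x (n + 1) + (t : ℂ) * p.2 / ((n : ℂ) + 2)) / (μ - 1 / ((n : ℂ) + 2))
      (y, (t : ℂ) * p.2 + y)

lemma resAux_snd (t : ℝ) (μ : ℂ) (x : ℕ → ℂ) (n : ℕ) :
    (resAux t μ x n).2 = ∑ i ∈ range (n + 1), (t : ℂ) ^ (n - i) * (resAux t μ x i).1 := by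
  induction n with
  | zero => simp [resAux]
  | succ n ih => rw [sum_succ_rel, ← ih]; rfl

lemma res_eq (t : ℝ) (μ : ℂ) (h : ∀ n : ℕ, μ ≠ 1 / ((n : ℂ) + 1)) (x : ℕ → ℂ) (n : ℕ) :
    μ * (resAux t μ x n).1 - (1 / ((n : ℂ) + 1)) * (resAux t μ x n).2 = x n := by
  have hd : ∀ k : ℕ, μ - 1 / ((k : ℂ) + 1) ≠ 0 := fun k => sub_ne_zero.mpr (h k)
  induction n with
  | zero =>
    have h0 : μ - 1 ≠ 0 := by
      have := hd 0
      norm_num at this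
      exact this
    have e : resAux t μ x 0 = (x 0 / (μ - 1), x 0 / (μ - 1)) := rfl
    rw [e]
    have hy := div_mul_cancel₀ (x 0) h0
    push_cast
    linear_combination hy
  | succ n ih =>
    have ha : μ - 1 / ((n : ℂ) + 2) ≠ 0 := by
      have := hd (n + 1)
      push_cast at this
      convert this using 3
      ring
    have e : resAux t μ x (n + 1) =
        ((x (n + 1) + (t : ℂ) * (resAux t μ x n).2 / ((n : ℂ) + 2)) / (μ - 1 / ((n : ℂ) + 2)),
          (t : ℂ) * (resAux t μ x n).2 +
            (x (n + 1) + (t : ℂ) * (resAux t μ x n).2 / ((n : ℂ) + 2)) / (μ - 1 / ((n : ℂ) + 2))) :=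
      rfl
    rw [e]
    have hy := div_mul_cancel₀
      (x (n + 1) + (t : ℂ) * (resAux t μ x n).2 / ((n : ℂ) + 2)) ha
    push_cast
    linear_combination hy

lemma resAux_add (t : ℝ) (μ : ℂ) (x y : ℕ → ℂ) (n : ℕ) :
    resAux t μ (x + y) n = resAux t μ x n + resAux t μ y n := by
  induction n with
  | zero =>
    simp only [resAux, Pi.add_apply, Prod.mk_add_mk, Prod.ext_iff]
    constructor <;> ring
  | succ n ih =>
    simp only [resAux, ih, Pi.add_apply, Prod.snd_add, Prod.mk_add_mk, Prod.ext_iff]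
    constructor <;> ring

lemma resAux_smul (t : ℝ) (μ : ℂ) (c : ℂ) (x : ℕ → ℂ) (n : ℕ) :
    resAux t μ (c • x) n = c • resAux t μ x n := by
  induction n with
  | zero =>
    simp only [resAux, Pi.smul_apply, smul_eq_mul, Prod.smul_mk, Prod.ext_iff]
    constructor <;> ring
  | succ n ih =>
    simp only [resAux, ih, Pi.smul_apply, Prod.smul_snd, Prod.smul_mk, smul_eq_mul,
      Prod.ext_iff]
    constructor <;> ring

lemma resAux_cont (t : ℝ) (μ : ℂ) (n : ℕ) : Continuous fun x : ℕ → ℂ => resAux t μ x n := by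
  induction n with
  | zero =>
    exact ((continuous_apply 0).div_const _).prodMk ((continuous_apply 0).div_const _)
  | succ n ih =>
    have hy : Continuous fun x : ℕ → ℂ =>
        (x (n + 1) + (t : ℂ) * (resAux t μ x n).2 / ((n : ℂ) + 2)) / (μ - 1 / ((n : ℂ) + 2)) :=
      ((continuous_apply (n + 1)).add
        ((continuous_const.mul (continuous_snd.comp ih)).div_const _)).div_const _
    exact hy.prodMk ((continuous_const.mul (continuous_snd.comp ih)).add hy)

noncomputable def resCLM (t : ℝ) (μ : ℂ) : (ℕ → ℂ) →L[ℂ] (ℕ → ℂ) :=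
  { toFun := fun x n => (resAux t μ x n).1
    map_add' := fun x y => funext fun n => by
      show (resAux t μ (x + y) n).1 = (resAux t μ x n).1 + (resAux t μ y n).1
      rw [resAux_add]; rfl
    map_smul' := fun c x => funext fun n => by
      show (resAux t μ (c • x) n).1 = c * (resAux t μ x n).1
      rw [resAux_smul]; rfl
    cont := continuous_pi fun n => continuous_fst.comp (resAux_cont t μ n) }

lemma resCLM_apply (t : ℝ) (μ : ℂ) (x : ℕ → ℂ) (n : ℕ) :
    resCLM t μ x n = (resAux t μ x n).1 := rfl

lemma hAx_eq (t : ℝ) (μ : ℂ) (L : (ℕ → ℂ) →L[ℂ] (ℕ → ℂ)) (hL : ∀ x, L x = genCesaro t x)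
    (x : ℕ → ℂ) :
    (algebraMap ℂ ((ℕ → ℂ) →L[ℂ] (ℕ → ℂ)) μ - L) x = μ • x - genCesaro t x := by
  rw [ContinuousLinearMap.sub_apply, hL, Algebra.algebraMap_eq_smul_one,
    ContinuousLinearMap.smul_apply, ContinuousLinearMap.one_apply]

lemma isUnit_res (t : ℝ) (μ : ℂ) (h : ∀ n : ℕ, μ ≠ 1 / ((n : ℂ) + 1))
    (L : (ℕ → ℂ) →L[ℂ] (ℕ → ℂ)) (hL : ∀ x, L x = genCesaro t x) :
    IsUnit (algebraMap ℂ ((ℕ → ℂ) →L[ℂ] (ℕ → ℂ)) μ - L) := by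
  set A := algebraMap ℂ ((ℕ → ℂ) →L[ℂ] (ℕ → ℂ)) μ - L with hA
  have hAM : ∀ x, A (resCLM t μ x) = x := by
    intro x
    funext n
    rw [hAx_eq t μ L hL]
    simp only [Pi.sub_apply, Pi.smul_apply, smul_eq_mul]
    rw [genCesaro]
    simp only [resCLM_apply]
    rw [← resAux_snd]
    exact res_eq t μ h x n
  have hinj : Function.Injective A := by
    intro x y hxy
    have h0 : A (x - y) = 0 := by rw [map_sub, hxy, sub_self]
    rw [hAx_eq t μ L hL] at h0
    have hg : genCesaro t (x - y) = μ • (x - y) := (sub_eq_zero.mp h0).symm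
    have := noeig t μ h _ hg
    exact sub_eq_zero.mp this
  refine ⟨⟨A, resCLM t μ, ?_, ?_⟩, rfl⟩
  · exact ContinuousLinearMap.ext fun x => hAM x
  · exact ContinuousLinearMap.ext fun x => hinj (hAM (A x))

lemma not_isUnit (t : ℝ) (m : ℕ)
    (L : (ℕ → ℂ) →L[ℂ] (ℕ → ℂ)) (hL : ∀ x, L x = genCesaro t x) :
    ¬ IsUnit (algebraMap ℂ ((ℕ → ℂ) →L[ℂ] (ℕ → ℂ)) (1 / ((m : ℂ) + 1)) - L) := by
  intro hu
  obtain ⟨u, hu⟩ := hu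
  set A := algebraMap ℂ ((ℕ → ℂ) →L[ℂ] (ℕ → ℂ)) (1 / ((m : ℂ) + 1)) - L with hA
  have hinj : Function.Injective A := by
    intro x y hxy
    have h1 : ((↑u⁻¹ * ↑u : (ℕ → ℂ) →L[ℂ] (ℕ → ℂ))) x = ((↑u⁻¹ * ↑u : (ℕ → ℂ) →L[ℂ] (ℕ → ℂ))) y := by
      rw [ContinuousLinearMap.mul_apply, ContinuousLinearMap.mul_apply, hu, hxy]
    rw [u.inv_mul] at h1
    exact h1
  have hz : A (eigvec t m) = A 0 := by
    rw [map_zero, hAx_eq t (1 / ((m : ℂ) + 1)) L hL, eigvec_eigen, sub_self]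
  have := hinj hz
  have h1 : eigvec t m m = 0 := by rw [this]; rfl
  rw [eigvec_self] at h1
  exact one_ne_zero h1

/-- For each `t ∈ [0,1)`: given the continuous linear operator `L` on `ω = ℂ^ℕ`
(product topology) induced by `C_t`, the spectrum of `L` in the algebra of
continuous linear endomorphisms of `ω` equals `Λ = {1/(n+1) : n ∈ ℕ}`, the set of
eigenvalues of `C_t` equals `Λ`, and each eigenvalue `1/(m+1)` is simple with
eigenspace `Ker((1/(m+1))I - C_t) = span{x^{[m]}}`. -/
theorem genCesaro_spectrum_omega (t : ℝ) (ht : t ∈ Set.Ico (0 : ℝ) 1)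
    (L : (ℕ → ℂ) →L[ℂ] (ℕ → ℂ)) (hL : ∀ x, L x = genCesaro t x) :
    spectrum ℂ L = {z : ℂ | ∃ n : ℕ, z = 1 / ((n : ℂ) + 1)} ∧
    {μ : ℂ | ∃ x : ℕ → ℂ, x ≠ 0 ∧ genCesaro t x = μ • x} =
      {z : ℂ | ∃ n : ℕ, z = 1 / ((n : ℂ) + 1)} ∧
    ∀ m : ℕ, {x : ℕ → ℂ | genCesaro t x = (1 / ((m : ℂ) + 1)) • x} =
      Set.range (fun c : ℂ => c • eigvec t m) := by

  refine ⟨?_, ?_, ?_⟩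
  · ext μ
    simp only [Set.mem_setOf_eq, spectrum.mem_iff]
    constructor
    · intro hns
      by_contra hc
      push_neg at hc
      exact hns (isUnit_res t μ hc L hL)
    · rintro ⟨m, rfl⟩
      exact not_isUnit t m L hL
  · ext μ
    simp only [Set.mem_setOf_eq]
    constructor
    · rintro ⟨x, hx0, hx⟩
      by_contra hc
      push_neg at hc
      exact hx0 (noeig t μ hc x hx)
    · rintro ⟨m, rfl⟩
      refine ⟨eigvec t m, ?_, eigvec_eigen t m⟩
      intro hz
      have : eigvec t m m = 0 := by rw [hz]; rfl
      rw [eigvec_self] at this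
      exact one_ne_zero this
  · intro m
    ext x
    simp only [Set.mem_setOf_eq, Set.mem_range]
    constructor
    · intro hx
      refine ⟨x m, funext fun n => ?_⟩
      rw [Pi.smul_apply, smul_eq_mul, ← eig_sol t m x hx n]
    · rintro ⟨c, rfl⟩
      rw [genCesaro_smul, eigvec_eigen, smul_comm]
end

section
/- Let t ∈ [0,1). Then the fixed-point set of C_t on ω is Ker(I − C_t) = span{x^{[0]}}, where x^{[0]} = (t^n)_{n∈ℕ₀}; and the range of I − C_t is (I − C_t)(ω) = {x ∈ ω : x_0 = 0}. In particular, Ker(I − C_t) ∩ (I − C_t)(ω) = {0}. -/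
lemma genCesaro_sum_succ (t : ℝ) (x : ℕ → ℂ) (n : ℕ) :
    ∑ i ∈ Finset.range (n + 2), (t : ℂ) ^ (n + 1 - i) * x i
      = (t : ℂ) * ∑ i ∈ Finset.range (n + 1), (t : ℂ) ^ (n - i) * x i + x (n + 1) := by
  rw [Finset.sum_range_succ, Finset.mul_sum]
  simp only [Nat.sub_self, pow_zero, one_mul]
  congr 1
  apply Finset.sum_congr rfl
  intro i hi
  have hi' : i ≤ n := Nat.lt_succ_iff.mp (Finset.mem_range.mp hi)
  have : n + 1 - i = (n - i) + 1 := by omega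
  rw [this, pow_succ]; ring

/-- auxiliary: builds a preimage `(xₙ, Sₙ)` of `y` under `I - C_t`. -/
noncomputable def genCesaroAux (t : ℝ) (y : ℕ → ℂ) : ℕ → ℂ × ℂ
  | 0 => (0, 0)
  | n + 1 =>
    let S := (genCesaroAux t y n).2
    let xn := (((n : ℂ) + 2) * y (n + 1) + (t : ℂ) * S) / ((n : ℂ) + 1)
    (xn, (t : ℂ) * S + xn)

/-- Let `t ∈ [0,1)`. The fixed-point set of `C_t` on `ω = ℂ^ℕ` is
`Ker(I - C_t) = span{x^{[0]}}` with `x^{[0]} = (tⁿ)ₙ`; the range of `I - C_t` is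
`{x ∈ ω : x₀ = 0}`; and `Ker(I - C_t) ∩ (I - C_t)(ω) = {0}`. -/
theorem genCesaro_ker_range_identity (t : ℝ) (ht : t ∈ Set.Ico (0 : ℝ) 1) :
    {x : ℕ → ℂ | genCesaro t x = x} =
      Set.range (fun c : ℂ => c • (fun n : ℕ => (t : ℂ) ^ n)) ∧
    {y : ℕ → ℂ | ∃ x : ℕ → ℂ, y = x - genCesaro t x} = {y : ℕ → ℂ | y 0 = 0} ∧
    {x : ℕ → ℂ | genCesaro t x = x} ∩
      {y : ℕ → ℂ | ∃ x : ℕ → ℂ, y = x - genCesaro t x} = {0} := by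
  have hcast : ∀ n : ℕ, ((n : ℂ) + 1) ≠ 0 := by
    intro n
    have := Nat.cast_add_one_ne_zero (R := ℂ) n
    exact_mod_cast this
  -- kernel equality
  have hker : {x : ℕ → ℂ | genCesaro t x = x} =
      Set.range (fun c : ℂ => c • (fun n : ℕ => (t : ℂ) ^ n)) := by
    ext x
    constructor
    · intro h
      have h' : ∀ n, genCesaro t x n = x n := fun n => congrFun h n
      have hS : ∀ n, ∑ i ∈ Finset.range (n + 1), (t : ℂ) ^ (n - i) * x i
          = ((n : ℂ) + 1) * x n := by
        intro n
        have := h' n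
        unfold genCesaro at this
        rw [one_div, inv_mul_eq_iff_eq_mul₀ (hcast n)] at this
        linear_combination this
      have hstep : ∀ n, x (n + 1) = (t : ℂ) * x n := by
        intro n
        have h1 := hS (n + 1)
        rw [genCesaro_sum_succ, hS n] at h1
        push_cast at h1
        have h2 : ((n : ℂ) + 1) * x (n + 1) = ((n : ℂ) + 1) * ((t : ℂ) * x n) := by
          linear_combination -h1
        exact (mul_left_cancel₀ (hcast n) h2)
      have hx : ∀ n, x n = x 0 * (t : ℂ) ^ n := by
        intro n
        induction n with
        | zero => simp
        | succ k ih => rw [hstep k, ih, pow_succ]; ring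
      exact ⟨x 0, by funext n; simpa [mul_comm] using (hx n).symm⟩
    · rintro ⟨c, rfl⟩
      funext n
      unfold genCesaro
      simp only [Pi.smul_apply, smul_eq_mul]
      have : ∑ i ∈ Finset.range (n + 1), (t : ℂ) ^ (n - i) * (c * (t : ℂ) ^ i)
          = ((n : ℂ) + 1) * (c * (t : ℂ) ^ n) := by
        have : ∀ i ∈ Finset.range (n + 1),
            (t : ℂ) ^ (n - i) * (c * (t : ℂ) ^ i) = c * (t : ℂ) ^ n := by
          intro i hi
          have hi' : i ≤ n := Nat.lt_succ_iff.mp (Finset.mem_range.mp hi)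
          rw [show (t : ℂ) ^ (n - i) * (c * (t : ℂ) ^ i) = c * ((t:ℂ) ^ (n - i) * (t:ℂ) ^ i) by ring,
            ← pow_add]
          congr 2
          omega
        rw [Finset.sum_congr rfl this, Finset.sum_const, Finset.card_range]
        push_cast; ring
      rw [this, one_div, inv_mul_cancel_left₀ (hcast n)]
  -- range equality
  have hrange : {y : ℕ → ℂ | ∃ x : ℕ → ℂ, y = x - genCesaro t x} = {y : ℕ → ℂ | y 0 = 0} := by
    ext y
    constructor
    · rintro ⟨x, rfl⟩
      simp [genCesaro]
    · intro hy0
      set x : ℕ → ℂ := fun n => (genCesaroAux t y n).1 with hxdef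
      have hSsum : ∀ n, ∑ i ∈ Finset.range (n + 1), (t : ℂ) ^ (n - i) * x i
          = (genCesaroAux t y n).2 := by
        intro n
        induction n with
        | zero => simp [genCesaroAux, hxdef]
        | succ k ih =>
          rw [genCesaro_sum_succ, ih]
          simp only [hxdef, genCesaroAux]
      refine ⟨x, ?_⟩
      funext n
      cases n with
      | zero =>
        simp only [Pi.sub_apply]
        unfold genCesaro
        simpa [hxdef, genCesaroAux] using hy0
      | succ k =>
        simp only [Pi.sub_apply]
        unfold genCesaro
        rw [hSsum (k + 1)]
        have hx1 : x (k + 1) = (((k : ℂ) + 2) * y (k + 1) + (t : ℂ) * (genCesaroAux t y k).2)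
            / ((k : ℂ) + 1) := by simp [hxdef, genCesaroAux]
        have hS1 : (genCesaroAux t y (k + 1)).2
            = (t : ℂ) * (genCesaroAux t y k).2 + x (k + 1) := by
          simp [hxdef, genCesaroAux]
        rw [hS1, hx1]
        have hk1 : ((k : ℂ) + 1) ≠ 0 := hcast k
        have hk2 : ((k : ℕ) + 1 : ℂ) + 1 ≠ 0 := by
          push_cast
          intro h
          have := hcast (k + 1)
          push_cast at this
          exact this (by linear_combination h)
        push_cast
        field_simp
        ring
  refine ⟨hker, hrange, ?_⟩
  rw [hker, hrange]
  ext x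
  simp only [Set.mem_inter_iff, Set.mem_range, Set.mem_setOf_eq, Set.mem_singleton_iff]
  constructor
  · rintro ⟨⟨c, rfl⟩, h0⟩
    simp only [Pi.smul_apply, smul_eq_mul, pow_zero, mul_one] at h0
    funext n
    simp [h0]
  · rintro rfl
    exact ⟨⟨0, by funext n; simp⟩, rfl⟩
end
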